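/- For any finite simple graph G, the coefficient of x in the chromatic polynomial χ_G is odd if and only if G is connected and bipartite. -/

import Mathlib

attribute [local instance 10] Classical.propDecidable

/-- The finset of proper colorings of `G` with color set `Fin C`. -/
noncomputable def properColorings {V : Type} [Fintype V] (G : SimpleGraph V) (C : ℕ) :
    Finset (V → Fin C) :=
  Finset.univ.filter fun κ => ∀ u w, G.Adj u w → κ u ≠ κ w

/-- The number of proper colorings of `G` using `m` available colors. -/
noncomputable def ncol {V : Type} [Fintype V] (G : SimpleGraph V) (m : ℕ) : ℕ :=
  (properColorings G m).card

/-- `G` is bipartite: it contains no odd cycle. -/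
def NoOddCycle {V : Type} (G : SimpleGraph V) : Prop :=
  ∀ (a : V) (c : G.Walk a a), c.IsCycle → ¬ Odd c.length

open SimpleGraph
open Fin.NatCast

section Aux

variable {V : Type} {G : SimpleGraph V}

lemma edge_end_of_path {w v : V} (p : G.Walk w v) (hp : p.IsPath) (he : s(v, w) ∈ p.edges) :
    p.length = 1 := by
  cases p with
  | nil => simp at he
  | @cons a b c h q =>
    rw [SimpleGraph.Walk.cons_isPath_iff] at hp
    simp only [SimpleGraph.Walk.edges_cons, List.mem_cons] at he
    rcases he with heq | hmem
    · rw [Sym2.eq_iff] at heq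
      rcases heq with ⟨hv, hw⟩ | ⟨hv, hw⟩
      · subst hv; subst hw; exact absurd h (G.loopless.irrefl _)
      · subst hv
        have := SimpleGraph.Walk.isPath_iff_eq_nil.mp hp.1
        simp [this]
    · exact absurd (SimpleGraph.Walk.snd_mem_support_of_mem_edges q hmem) hp.2

/-- Every odd closed walk contains an odd cycle. -/
lemma exists_odd_cycle_aux : ∀ n : ℕ, ∀ {a : V} (p : G.Walk a a), p.length = n → Odd n →
    ∃ (b : V) (c : G.Walk b b), c.IsCycle ∧ Odd c.length := by
  intro n
  induction n using Nat.strong_induction_on with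
  | _ n ih =>
    intro a p hn hodd
    have hpos : 0 < p.length := by rcases hodd with ⟨k, hk⟩; omega
    have hnn : ¬ p.Nil := SimpleGraph.Walk.not_nil_iff_lt_length.mpr hpos
    obtain ⟨w, h', c', rfl⟩ := SimpleGraph.Walk.not_nil_iff.mp hnn
    have hlen : c'.length + 1 = n := by simpa using hn
    by_cases hdup : c'.support.Nodup
    · have hpath : c'.IsPath := (SimpleGraph.Walk.isPath_def _).mpr hdup
      by_cases he : s(a, w) ∈ c'.edges
      · have h1 := edge_end_of_path c' hpath he
        rcases hodd with ⟨k, hk⟩; omega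
      · exact ⟨a, SimpleGraph.Walk.cons h' c',
          (SimpleGraph.Walk.cons_isCycle_iff c' h').mpr ⟨hpath, he⟩, by
            rw [SimpleGraph.Walk.length_cons, hlen]; exact hodd⟩
    · obtain ⟨x, hx⟩ := List.exists_duplicate_iff_not_nodup.mpr hdup
      have hcount : 2 ≤ c'.support.count x := List.duplicate_iff_two_le_count.mp hx
      have hxmem : x ∈ c'.support := List.count_pos_iff.mp (by omega)
      have hspec := (c'.take_spec hxmem).symm
      have h1 : (c'.takeUntil x hxmem).support.count x = 1 :=
        c'.count_support_takeUntil_eq_one hxmem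
      have hc2 : 1 ≤ (c'.dropUntil x hxmem).support.tail.count x := by
        have hcnt := congrArg (fun l => List.count x l) (congrArg SimpleGraph.Walk.support hspec)
        simp only [SimpleGraph.Walk.support_append, List.count_append] at hcnt
        omega
      have hx2 : x ∈ (c'.dropUntil x hxmem).support.tail := List.count_pos_iff.mp (by omega)
      have hc2nn : ¬ (c'.dropUntil x hxmem).Nil := by
        rw [SimpleGraph.Walk.not_nil_iff_lt_length]
        have h5 : (c'.dropUntil x hxmem).support.tail.length = (c'.dropUntil x hxmem).length := by
          rw [List.length_tail, SimpleGraph.Walk.length_support]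
          simp
        have h6 : 0 < (c'.dropUntil x hxmem).support.tail.length :=
          List.length_pos_iff.mpr (List.ne_nil_of_mem hx2)
        omega
      obtain ⟨y, h2, c3, hc3⟩ := SimpleGraph.Walk.not_nil_iff.mp hc2nn
      have hx3 : x ∈ c3.support := by
        rw [hc3] at hx2
        simpa using hx2
      set c1 := c'.takeUntil x hxmem with hc1def
      set c3a := c3.takeUntil x hx3 with hc3adef
      set c3b := c3.dropUntil x hx3 with hc3bdef
      have e3 : c3.length = c3a.length + c3b.length := by
        have := congrArg SimpleGraph.Walk.length (c3.take_spec hx3).symm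
        rw [SimpleGraph.Walk.length_append] at this
        exact this
      have e1 : c'.length = c1.length + (c'.dropUntil x hxmem).length := by
        have := congrArg SimpleGraph.Walk.length hspec
        rw [SimpleGraph.Walk.length_append] at this
        exact this
      have e2 : (c'.dropUntil x hxmem).length = c3.length + 1 := by
        rw [hc3]; simp
      have hsum : (SimpleGraph.Walk.cons h2 c3a).length +
          ((SimpleGraph.Walk.cons h' c1).append c3b).length = n := by
        simp only [SimpleGraph.Walk.length_append, SimpleGraph.Walk.length_cons]
        omega
      rcases Nat.even_or_odd (SimpleGraph.Walk.cons h2 c3a).length with hE | hO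
      · have hO2 : Odd ((SimpleGraph.Walk.cons h' c1).append c3b).length := by
          rcases hE with ⟨k, hk⟩; rcases hodd with ⟨m, hm⟩
          exact ⟨m - k, by omega⟩
        refine ih _ ?_ ((SimpleGraph.Walk.cons h' c1).append c3b) rfl hO2
        have : 0 < (SimpleGraph.Walk.cons h2 c3a).length := by simp
        omega
      · refine ih _ ?_ (SimpleGraph.Walk.cons h2 c3a) rfl hO
        have : 0 < ((SimpleGraph.Walk.cons h' c1).append c3b).length := by
          simp [SimpleGraph.Walk.length_append]
        omega

lemma fin2_cast_eq_zero : ∀ n : ℕ, ((n : Fin 2) = 0) ↔ Even n := by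
  intro n
  induction n with
  | zero => simp
  | succ n ih =>
    have key : ∀ a : Fin 2, (a + 1 = 0 ↔ ¬ a = 0) := by decide
    rw [Nat.cast_succ, Nat.even_add_one, ← ih, key]

lemma fin2_ne_iff {a b : Fin 2} : a ≠ b ↔ b = a + 1 := by revert a b; decide

lemma walk_parity (κ : V → Fin 2) (hκ : ∀ u w, G.Adj u w → κ u ≠ κ w)
    {u v : V} (p : G.Walk u v) : κ v = κ u + (p.length : Fin 2) := by
  induction p with
  | nil => simp
  | @cons a b c h q ih =>
    have hab : κ b = κ a + 1 := fin2_ne_iff.mp (hκ a b h)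
    rw [SimpleGraph.Walk.length_cons, ih, hab]
    push_cast
    abel

lemma noOddCycle_of_coloring (κ : V → Fin 2) (hκ : ∀ u w, G.Adj u w → κ u ≠ κ w) :
    NoOddCycle G := by
  intro a c _ hodd
  have h := walk_parity κ hκ c
  have h0 : ((c.length : Fin 2)) = 0 := by
    have := h.symm
    rwa [add_eq_left] at this
  rw [fin2_cast_eq_zero] at h0
  exact (Nat.not_even_iff_odd.mpr hodd) h0

lemma mem_properColorings [Fintype V] {C : ℕ} {κ : V → Fin C} :
    κ ∈ properColorings G C ↔ ∀ u w, G.Adj u w → κ u ≠ κ w := by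
  simp [properColorings]

lemma ncol_of_isEmpty [Fintype V] [IsEmpty V] (G : SimpleGraph V) (m : ℕ) : ncol G m = 1 := by
  rw [ncol]
  have h : properColorings G m = Finset.univ :=
    Finset.eq_univ_of_forall
      (fun κ => mem_properColorings.mpr (fun u => (IsEmpty.false (α := V) u).elim))
  rw [h, Finset.card_univ]
  haveI : Unique (V → Fin m) := Pi.uniqueOfIsEmpty _
  exact Fintype.card_unique

lemma four_dvd_ncol4 [Fintype V] (G : SimpleGraph V) (v0 : V) : 4 ∣ ncol G 4 := by
  have hfib : ∀ c : Fin 4,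
      ((properColorings G 4).filter fun κ => κ v0 = c).card =
      ((properColorings G 4).filter fun κ => κ v0 = 0).card := by
    intro c
    refine Finset.card_bij' (fun κ _ => fun w => κ w - c) (fun κ _ => fun w => κ w + c)
      ?_ ?_ ?_ ?_
    · intro κ hκ
      rw [Finset.mem_filter, mem_properColorings] at hκ ⊢
      obtain ⟨h1, h2⟩ := hκ
      refine ⟨fun a b h hc => h1 a b h (by simpa [sub_left_inj] using hc), by simp [h2]⟩
    · intro κ hκ
      rw [Finset.mem_filter, mem_properColorings] at hκ ⊢
      obtain ⟨h1, h2⟩ := hκ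
      refine ⟨fun a b h hc => h1 a b h (by simpa [add_left_inj] using hc), by simp [h2]⟩
    · intro κ _; funext w; simp
    · intro κ _; funext w; simp
  have hcard := Finset.card_eq_sum_card_fiberwise
    (s := properColorings G 4) (t := (Finset.univ : Finset (Fin 4)))
    (f := fun κ => κ v0) (fun x _ => Finset.mem_univ _)
  rw [ncol, hcard, Finset.sum_congr rfl (fun c _ => hfib c), Finset.sum_const,
    Finset.card_univ, Fintype.card_fin, smul_eq_mul]
  exact Dvd.intro _ rfl

lemma four_dvd_ncol2 [Fintype V] {u v : V} (huv : ¬ G.Reachable u v) : 4 ∣ ncol G 2 := by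
  have tt : ∀ t : Fin 2, t + t = 0 := by decide
  set g : Fin 2 × Fin 2 → V → Fin 2 :=
    fun p w => (if G.Reachable u w then p.1 + p.2 else 0) + p.2 with hg
  have hgconst : ∀ (p : Fin 2 × Fin 2) (w x : V), G.Adj w x → g p w = g p x := by
    intro p w x h
    have hiff : G.Reachable u w ↔ G.Reachable u x :=
      ⟨fun r => r.trans h.reachable, fun r => r.trans h.symm.reachable⟩
    simp only [hg, hiff]
  have hgu : ∀ p : Fin 2 × Fin 2, g p u = p.1 := by
    intro p
    have hr : G.Reachable u u := Reachable.refl u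
    simp only [hg]
    rw [if_pos hr, add_assoc, tt, add_zero]
  have hgv : ∀ p : Fin 2 × Fin 2, g p v = p.2 := by
    intro p
    simp only [hg]
    rw [if_neg huv, zero_add]
  have hginv : ∀ (p : Fin 2 × Fin 2) (κ : V → Fin 2), (fun w => (κ w + g p w) + g p w) = κ := by
    intro p κ; funext w
    rw [add_assoc, tt, add_zero]
  have hfib : ∀ p : Fin 2 × Fin 2,
      ((properColorings G 2).filter fun κ => (κ u, κ v) = p).card =
      ((properColorings G 2).filter fun κ => (κ u, κ v) = ((0 : Fin 2), (0 : Fin 2))).card := by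
    intro p
    refine Finset.card_bij' (fun κ _ => fun w => κ w + g p w) (fun κ _ => fun w => κ w + g p w)
      ?_ ?_ (fun κ _ => hginv p κ) (fun κ _ => hginv p κ)
    · intro κ hκ
      rw [Finset.mem_filter, mem_properColorings] at hκ ⊢
      obtain ⟨h1, h2⟩ := hκ
      rw [Prod.mk.injEq] at h2
      refine ⟨fun a b h hc => h1 a b h ?_, ?_⟩
      · rwa [hgconst p a b h, add_left_inj] at hc
      · dsimp only
        rw [Prod.mk.injEq, hgu, hgv, h2.1, h2.2, tt, tt]
        exact ⟨rfl, rfl⟩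
    · intro κ hκ
      rw [Finset.mem_filter, mem_properColorings] at hκ ⊢
      obtain ⟨h1, h2⟩ := hκ
      rw [Prod.mk.injEq] at h2
      refine ⟨fun a b h hc => h1 a b h ?_, ?_⟩
      · rwa [hgconst p a b h, add_left_inj] at hc
      · dsimp only
        rw [Prod.mk.injEq, hgu, hgv, h2.1, h2.2, zero_add, zero_add]
        exact ⟨rfl, rfl⟩
  have hcard := Finset.card_eq_sum_card_fiberwise
    (s := properColorings G 2) (t := (Finset.univ : Finset (Fin 2 × Fin 2)))
    (f := fun κ => (κ u, κ v)) (fun x _ => Finset.mem_univ _)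
  rw [ncol, hcard, Finset.sum_congr rfl (fun p _ => hfib p), Finset.sum_const,
    Finset.card_univ, smul_eq_mul]
  have h4 : Fintype.card (Fin 2 × Fin 2) = 4 := by simp
  rw [h4]
  exact Dvd.intro _ rfl

lemma adjconst_walk (δ : V → Fin 2) (hδ : ∀ a b : V, G.Adj a b → δ a = δ b)
    {s t : V} (p : G.Walk s t) : δ s = δ t := by
  induction p with
  | nil => rfl
  | cons hab pw ih => exact (hδ _ _ hab).trans ih

/-- distance-parity coloring is proper for connected bipartite graphs -/
lemma dist_coloring_proper (hconn : G.Connected) (hbip : NoOddCycle G) (v0 : V) :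
    ∀ u w, G.Adj u w → ((G.dist v0 u : ℕ) : Fin 2) ≠ ((G.dist v0 w : ℕ) : Fin 2) := by
  have tt : ∀ t : Fin 2, t + t = 0 := by decide
  intro u w h heq
  obtain ⟨p, hp⟩ := hconn.exists_walk_length_eq_dist v0 u
  obtain ⟨q, hq⟩ := hconn.exists_walk_length_eq_dist v0 w
  set W : G.Walk v0 v0 := p.append (SimpleGraph.Walk.cons h q.reverse) with hW
  have hWlen : W.length = G.dist v0 u + (G.dist v0 w + 1) := by
    rw [hW, SimpleGraph.Walk.length_append, SimpleGraph.Walk.length_cons,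
      SimpleGraph.Walk.length_reverse, hp, hq]
  have heven : Even (G.dist v0 u + G.dist v0 w) := by
    rw [← fin2_cast_eq_zero]
    push_cast
    rw [heq, tt]
  have hodd : Odd W.length := by
    rcases heven with ⟨k, hk⟩
    exact ⟨k, by omega⟩
  obtain ⟨b, c, hc, hco⟩ := exists_odd_cycle_aux W.length W rfl hodd
  exact hbip b c hc hco

lemma ncol2_eq_two [Fintype V] (hconn : G.Connected) (hbip : NoOddCycle G) :
    ncol G 2 = 2 := by
  obtain ⟨v0⟩ := hconn.nonempty
  set κ0 : V → Fin 2 := fun v => ((G.dist v0 v : ℕ) : Fin 2) with hκ0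
  have hprop : ∀ u w, G.Adj u w → κ0 u ≠ κ0 w := dist_coloring_proper hconn hbip v0
  have hprop1 : ∀ u w, G.Adj u w → κ0 u + 1 ≠ κ0 w + 1 := by
    intro u w h hc
    exact hprop u w h (by rwa [add_left_inj] at hc)
  have key : properColorings G 2 = {κ0, fun v => κ0 v + 1} := by
    ext κ
    rw [mem_properColorings, Finset.mem_insert, Finset.mem_singleton]
    constructor
    · intro hκ
      have hδ : ∀ a b : V, G.Adj a b → κ a + κ0 a = κ b + κ0 b := by
        intro a b h
        have h1 := hκ a b h
        have h2 := hprop a b h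
        revert h1 h2
        generalize κ a = x; generalize κ b = y; generalize κ0 a = z; generalize κ0 b = t
        revert x y z t; decide
      have hconst : ∀ t : V, κ t + κ0 t = κ v0 + κ0 v0 := by
        intro t
        obtain ⟨pw⟩ := hconn t v0
        exact adjconst_walk (fun s => κ s + κ0 s) hδ pw
      rcases (by decide : ∀ x : Fin 2, x = 0 ∨ x = 1) (κ v0 + κ0 v0) with h0 | h1
      · left
        funext t
        have := hconst t
        rw [h0] at this
        revert this
        generalize κ t = x; generalize κ0 t = y
        revert x y; decide
      · right
        funext t
        have := hconst t
        rw [h1] at this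
        revert this
        generalize κ t = x; generalize κ0 t = y
        revert x y; decide
    · rintro (rfl | rfl)
      · exact hprop
      · exact hprop1
  rw [ncol, key]
  rw [Finset.card_pair]
  intro hcontra
  have := congrFun hcontra v0
  revert this
  generalize κ0 v0 = x
  revert x; decide

lemma poly_key (p : Polynomial ℤ) : (4 : ℤ) ∣ (p.eval 2 - p.eval 4 - 2 * p.coeff 1) := by
  induction p using Polynomial.induction_on' with
  | add p q hp hq =>
    have : (p + q).eval 2 - (p + q).eval 4 - 2 * (p + q).coeff 1 =
        (p.eval 2 - p.eval 4 - 2 * p.coeff 1) + (q.eval 2 - q.eval 4 - 2 * q.coeff 1) := by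
      simp [Polynomial.eval_add, Polynomial.coeff_add]; ring
    rw [this]
    exact dvd_add hp hq
  | monomial n a =>
    rw [Polynomial.eval_monomial, Polynomial.eval_monomial, Polynomial.coeff_monomial]
    match n with
    | 0 => simp
    | 1 => norm_num; exact ⟨-a, by ring⟩
    | (k+2) =>
      simp only [if_neg (by omega : ¬ (k+2) = 1)]
      have : a * 2 ^ (k + 2) - a * 4 ^ (k + 2) - 2 * 0 = 4 * (a * 2 ^ k - a * 4 ^ (k+1)) := by
        ring
      rw [this]
      exact Dvd.intro _ rfl

end Aux

/-- For any finite simple graph `G` with chromatic polynomial `χ`, the coefficient of `x`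
in `χ` is odd if and only if `G` is connected and bipartite (contains no odd cycle). -/
theorem stmt8 {V : Type} [Fintype V] (G : SimpleGraph V)
    (χ : Polynomial ℤ) (hχ : ∀ m : ℕ, 0 < m → χ.eval (m : ℤ) = ncol G m) :
    Odd (χ.coeff 1) ↔ (G.Connected ∧ NoOddCycle G) := by
  have key := poly_key χ
  have e2 := hχ 2 (by norm_num)
  have e4 := hχ 4 (by norm_num)
  rw [show ((2 : ℕ) : ℤ) = 2 by norm_num] at e2
  rw [show ((4 : ℕ) : ℤ) = 4 by norm_num] at e4
  rw [e2, e4] at key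
  constructor
  · intro hodd
    obtain ⟨t, ht⟩ := hodd
    by_cases hne : Nonempty V
    case neg =>
      haveI : IsEmpty V := not_nonempty_iff.mp hne
      rw [ncol_of_isEmpty, ncol_of_isEmpty] at key
      obtain ⟨m, hm⟩ := key
      push_cast at hm
      omega
    obtain ⟨v0⟩ := hne
    obtain ⟨k4, hk4⟩ := four_dvd_ncol4 G v0
    have h2 : ¬ (4 ∣ ncol G 2) := by
      rintro ⟨k2, hk2⟩
      obtain ⟨m, hm⟩ := key
      rw [hk2, hk4, ht] at hm
      push_cast at hm
      omega
    have hpos : (properColorings G 2).Nonempty := by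
      rw [← Finset.card_pos]
      by_contra h
      push_neg at h
      have h0 : ncol G 2 = 0 := by rw [ncol]; omega
      exact h2 (h0 ▸ dvd_zero 4)
    obtain ⟨κ, hκm⟩ := hpos
    have hκ := mem_properColorings.mp hκm
    have hbip : NoOddCycle G := noOddCycle_of_coloring κ hκ
    have hpre : G.Preconnected := by
      intro u v
      by_contra hr
      exact h2 (four_dvd_ncol2 hr)
    exact ⟨(SimpleGraph.connected_iff G).mpr ⟨hpre, ⟨v0⟩⟩, hbip⟩
  · rintro ⟨hconn, hbip⟩
    have h2 := ncol2_eq_two hconn hbip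
    obtain ⟨v0⟩ := hconn.nonempty
    obtain ⟨k4, hk4⟩ := four_dvd_ncol4 G v0
    obtain ⟨m, hm⟩ := key
    rw [h2, hk4] at hm
    push_cast at hm
    exact ⟨-(k4 : ℤ) - m, by linarith⟩
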